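/- arXiv:2409.04223 — 2 statements merged into one kernel-verified Lean document; each statement's English description precedes it below -/
import Mathlib

section
/- Let K₁ = diag(b, c) and K₂ be the 2×2 matrix with single nonzero entry a in position (1,2), where a,b,c are differentiable complex functions of ω satisfying |a|² + |c|² = 1 and |b| = 1 (so K₁†K₁ + K₂†K₂ = I). Define K̃ⱼ' = Kⱼ' − i Σₖ hⱼₖ Kₖ for a Hermitian 2×2 matrix h. Then min over h of Tr(Σⱼ K̃ⱼ'† K̃ⱼ') equals [4|a|²|a'|² + (a*a' − (a')*a)²]/(4|a|²) + [4(|b|²+|c|²)(|b'|²+|c'|²) + (b*b' − (b')*b + c*c' − (c')*c)²]/(4(|b|²+|c|²)), provided a ≠ 0. -/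
open Complex

lemma nsq (z : ℂ) : ‖z‖ ^ 2 = z.re ^ 2 + z.im ^ 2 := by
  rw [Complex.sq_norm, Complex.normSq_apply]; ring

lemma reNum1 (A A' : ℂ) :
    (((4 * ‖A‖ ^ 2 * ‖A'‖ ^ 2 : ℂ)
        + ((starRingEnd ℂ) A * A' - (starRingEnd ℂ) A' * A) ^ 2).re)
    = 4 * (A.re ^ 2 + A.im ^ 2) * (A'.re ^ 2 + A'.im ^ 2)
      - 4 * (A.re * A'.im - A.im * A'.re) ^ 2 := by
  simp only [← Complex.ofReal_pow]
  simp only [nsq]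
  simp only [pow_two, Complex.add_re, Complex.sub_re, Complex.sub_im,
    Complex.add_im, Complex.mul_re, Complex.mul_im, Complex.I_re, Complex.I_im, Complex.conj_re,
    Complex.conj_im, Complex.ofReal_re, Complex.ofReal_im, Complex.ofReal_add,
    Complex.re_ofNat, Complex.im_ofNat]
  ring

lemma reNum2 (B B' C C' : ℂ) :
    (((4 * (‖B‖ ^ 2 + ‖C‖ ^ 2) * (‖B'‖ ^ 2 + ‖C'‖ ^ 2) : ℂ)
        + ((starRingEnd ℂ) B * B' - (starRingEnd ℂ) B' * B
            + (starRingEnd ℂ) C * C' - (starRingEnd ℂ) C' * C) ^ 2).re)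
    = 4 * (B.re ^ 2 + B.im ^ 2 + (C.re ^ 2 + C.im ^ 2))
          * (B'.re ^ 2 + B'.im ^ 2 + (C'.re ^ 2 + C'.im ^ 2))
      - 4 * (B.re * B'.im - B.im * B'.re + (C.re * C'.im - C.im * C'.re)) ^ 2 := by
  simp only [← Complex.ofReal_pow]
  simp only [nsq]
  simp only [pow_two, Complex.add_re, Complex.sub_re, Complex.sub_im,
    Complex.add_im, Complex.mul_re, Complex.mul_im, Complex.I_re, Complex.I_im, Complex.conj_re,
    Complex.conj_im, Complex.ofReal_re, Complex.ofReal_im, Complex.ofReal_add,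
    Complex.re_ofNat, Complex.im_ofNat]
  ring

lemma normsub (A' A : ℂ) (t : ℝ) :
    ‖A' - Complex.I * A * (t : ℂ)‖ ^ 2
    = (A'.re + A.im * t) ^ 2 + (A'.im - A.re * t) ^ 2 := by
  simp only [nsq, Complex.sub_re, Complex.sub_im, Complex.mul_re, Complex.mul_im,
    Complex.I_re, Complex.I_im, Complex.ofReal_re, Complex.ofReal_im]
  ring

set_option maxHeartbeats 1000000 in
/-- Minimization over the Hermitian matrix `h` of `Tr(Σⱼ K̃ⱼ'† K̃ⱼ')` for the Kraus pair
`K₁ = diag(b, c)`, `K₂ = [[0, a], [0, 0]]` of a qubit channel depending on `ω`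
(primes denote `ω`-derivatives; the trace equals
`2|h₁₂|² + |a' − i a h₂₂|² + |b' − i b h₁₁|² + |c' − i c h₁₁|²`).  The minimum equals
`[4|a|²|a'|² + (a*a' − (a')*a)²]/(4|a|²)
  + [4(|b|²+|c|²)(|b'|²+|c'|²) + (b*b' − (b')*b + c*c' − (c')*c)²]/(4(|b|²+|c|²))`. -/
theorem min_trace_kraus_variation
    (a b c : ℝ → ℂ) (ω : ℝ)
    (ha : DifferentiableAt ℝ a ω) (hb : DifferentiableAt ℝ b ω)
    (hc : DifferentiableAt ℝ c ω)
    (hnorm : ‖a ω‖ ^ 2 + ‖c ω‖ ^ 2 = 1) (hbnorm : ‖b ω‖ = 1) (ha0 : a ω ≠ 0) :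
    IsLeast
      {r : ℝ | ∃ (h11 h22 : ℝ) (h12 : ℂ),
        r = 2 * ‖h12‖ ^ 2
          + ‖deriv a ω - Complex.I * a ω * h22‖ ^ 2
          + ‖deriv b ω - Complex.I * b ω * h11‖ ^ 2
          + ‖deriv c ω - Complex.I * c ω * h11‖ ^ 2}
      ((((4 * ‖a ω‖ ^ 2 * ‖deriv a ω‖ ^ 2 : ℂ)
          + ((starRingEnd ℂ) (a ω) * deriv a ω
              - (starRingEnd ℂ) (deriv a ω) * a ω) ^ 2).re) / (4 * ‖a ω‖ ^ 2)
        + (((4 * (‖b ω‖ ^ 2 + ‖c ω‖ ^ 2) * (‖deriv b ω‖ ^ 2 + ‖deriv c ω‖ ^ 2) : ℂ)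
          + ((starRingEnd ℂ) (b ω) * deriv b ω - (starRingEnd ℂ) (deriv b ω) * b ω
              + (starRingEnd ℂ) (c ω) * deriv c ω
              - (starRingEnd ℂ) (deriv c ω) * c ω) ^ 2).re)
            / (4 * (‖b ω‖ ^ 2 + ‖c ω‖ ^ 2))) := by
  set p := (a ω).re with hp
  set q := (a ω).im with hq
  set p' := (deriv a ω).re with hp'
  set q' := (deriv a ω).im with hq'
  set u := (b ω).re with hu
  set v := (b ω).im with hv
  set u' := (deriv b ω).re with hu'
  set v' := (deriv b ω).im with hv'
  set x := (c ω).re with hx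
  set y := (c ω).im with hy
  set x' := (deriv c ω).re with hx'
  set y' := (deriv c ω).im with hy'
  have hS1 : 0 < p ^ 2 + q ^ 2 := by
    have h := Complex.normSq_pos.mpr ha0
    rw [Complex.normSq_apply] at h
    nlinarith [h]
  have hbn : u ^ 2 + v ^ 2 = 1 := by
    rw [hu, hv, ← nsq, hbnorm]; norm_num
  have hS2 : 0 < u ^ 2 + v ^ 2 + (x ^ 2 + y ^ 2) := by
    nlinarith [sq_nonneg x, sq_nonneg y]
  rw [reNum1, reNum2, nsq (a ω), nsq (b ω), nsq (c ω)]
  simp only [← hp, ← hq, ← hu, ← hv, ← hx, ← hy, ← hp', ← hq', ← hu', ← hv', ← hx', ← hy']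
  constructor
  · refine ⟨(u * v' - v * u' + (x * y' - y * x')) / (u ^ 2 + v ^ 2 + (x ^ 2 + y ^ 2)),
      (p * q' - q * p') / (p ^ 2 + q ^ 2), 0, ?_⟩
    rw [normsub, normsub, normsub]
    simp only [norm_zero, ← hp, ← hq, ← hu, ← hv, ← hx, ← hy, ← hp', ← hq', ← hu', ← hv',
      ← hx', ← hy']
    have e1 : (4 * (p ^ 2 + q ^ 2) * (p' ^ 2 + q' ^ 2)
          - 4 * (p * q' - q * p') ^ 2) / (4 * (p ^ 2 + q ^ 2))
        = (p' + q * ((p * q' - q * p') / (p ^ 2 + q ^ 2))) ^ 2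
          + (q' - p * ((p * q' - q * p') / (p ^ 2 + q ^ 2))) ^ 2 := by
      field_simp
      ring
    have e2 : (4 * (u ^ 2 + v ^ 2 + (x ^ 2 + y ^ 2)) * (u' ^ 2 + v' ^ 2 + (x' ^ 2 + y' ^ 2))
          - 4 * (u * v' - v * u' + (x * y' - y * x')) ^ 2)
            / (4 * (u ^ 2 + v ^ 2 + (x ^ 2 + y ^ 2)))
        = (u' + v * ((u * v' - v * u' + (x * y' - y * x'))
              / (u ^ 2 + v ^ 2 + (x ^ 2 + y ^ 2)))) ^ 2
          + (v' - u * ((u * v' - v * u' + (x * y' - y * x'))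
              / (u ^ 2 + v ^ 2 + (x ^ 2 + y ^ 2)))) ^ 2
          + ((x' + y * ((u * v' - v * u' + (x * y' - y * x'))
              / (u ^ 2 + v ^ 2 + (x ^ 2 + y ^ 2)))) ^ 2
            + (y' - x * ((u * v' - v * u' + (x * y' - y * x'))
              / (u ^ 2 + v ^ 2 + (x ^ 2 + y ^ 2)))) ^ 2) := by
      field_simp
      ring
    rw [e1, e2]
    ring
  · rintro r ⟨h11, h22, h12, rfl⟩
    rw [normsub, normsub, normsub]
    simp only [← hp, ← hq, ← hu, ← hv, ← hx, ← hy, ← hp', ← hq', ← hu', ← hv', ← hx', ← hy']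
    clear_value p q p' q' u v u' v' x y x' y'
    have k1 : (4 * (p ^ 2 + q ^ 2) * (p' ^ 2 + q' ^ 2)
          - 4 * (p * q' - q * p') ^ 2) / (4 * (p ^ 2 + q ^ 2))
        ≤ (p' + q * h22) ^ 2 + (q' - p * h22) ^ 2 := by
      rw [div_le_iff₀ (by positivity)]
      nlinarith [sq_nonneg (h22 * (p ^ 2 + q ^ 2) - (p * q' - q * p'))]
    have k2 : (4 * (u ^ 2 + v ^ 2 + (x ^ 2 + y ^ 2)) * (u' ^ 2 + v' ^ 2 + (x' ^ 2 + y' ^ 2))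
          - 4 * (u * v' - v * u' + (x * y' - y * x')) ^ 2)
            / (4 * (u ^ 2 + v ^ 2 + (x ^ 2 + y ^ 2)))
        ≤ (u' + v * h11) ^ 2 + (v' - u * h11) ^ 2 + ((x' + y * h11) ^ 2 + (y' - x * h11) ^ 2) := by
      rw [div_le_iff₀ (by positivity)]
      nlinarith [sq_nonneg (h11 * (u ^ 2 + v ^ 2 + (x ^ 2 + y ^ 2))
        - (u * v' - v * u' + (x * y' - y * x')))]
    have k0 : 0 ≤ 2 * ‖h12‖ ^ 2 := by positivity
    linarith
end

section
/- Let p₁ = p₄ = ½ sin²(ωT'/2) and p₂ = p₃ = ½ cos²(ωT'/2) be a probability distribution over four outcomes depending on a real parameter ω (with T' > 0 fixed and sin(ωT') ≠ 0). Then the classical Fisher information Σⱼ (∂_ω pⱼ)²/pⱼ equals T'². -/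
lemma aux_deriv_sin (ω T' : ℝ) :
    HasDerivAt (fun x => 1 / 2 * Real.sin (x * T' / 2) ^ 2)
      (T' / 2 * (Real.sin (ω * T' / 2) * Real.cos (ω * T' / 2))) ω := by
  have h1 : HasDerivAt (fun x : ℝ => x * T' / 2) (T' / 2) ω := by
    simpa using ((hasDerivAt_id ω).mul_const T').div_const 2
  have h2 := ((Real.hasDerivAt_sin (ω * T' / 2)).comp ω h1).pow 2
  have h3 := h2.const_mul (1 / 2 : ℝ)
  refine h3.congr_deriv ?_
  simp [Function.comp]
  ring

lemma aux_deriv_cos (ω T' : ℝ) :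
    HasDerivAt (fun x => 1 / 2 * Real.cos (x * T' / 2) ^ 2)
      (-(T' / 2 * (Real.sin (ω * T' / 2) * Real.cos (ω * T' / 2)))) ω := by
  have h1 : HasDerivAt (fun x : ℝ => x * T' / 2) (T' / 2) ω := by
    simpa using ((hasDerivAt_id ω).mul_const T').div_const 2
  have h2 := ((Real.hasDerivAt_cos (ω * T' / 2)).comp ω h1).pow 2
  have h3 := h2.const_mul (1 / 2 : ℝ)
  refine h3.congr_deriv ?_
  simp [Function.comp]
  ring

/-- For the four-outcome distribution `p₁ = p₄ = ½ sin²(ωT'/2)`,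
`p₂ = p₃ = ½ cos²(ωT'/2)` (with `T' > 0` and `sin(ωT') ≠ 0`, so all `pⱼ > 0`),
the classical Fisher information `Σⱼ (∂_ω pⱼ)²/pⱼ` equals `T'²`. -/
theorem fisher_information_of_control_measurement (ω T' : ℝ) (hT' : 0 < T')
    (hsin : Real.sin (ω * T') ≠ 0) :
    let p : Fin 4 → ℝ → ℝ := fun j x =>
      if j = 0 ∨ j = 3 then 1 / 2 * Real.sin (x * T' / 2) ^ 2
      else 1 / 2 * Real.cos (x * T' / 2) ^ 2
    (∑ j : Fin 4, (deriv (p j) ω) ^ 2 / p j ω) = T' ^ 2 := by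
  intro p
  have hdouble : Real.sin (ω * T') = 2 * Real.sin (ω * T' / 2) * Real.cos (ω * T' / 2) := by
    have := Real.sin_two_mul (ω * T' / 2)
    rw [show 2 * (ω * T' / 2) = ω * T' by ring] at this
    linarith [this]
  have hs : Real.sin (ω * T' / 2) ≠ 0 := fun h => hsin (by rw [hdouble, h]; ring)
  have hc : Real.cos (ω * T' / 2) ≠ 0 := fun h => hsin (by rw [hdouble, h]; ring)
  have hds : deriv (fun x => 1 / 2 * Real.sin (x * T' / 2) ^ 2) ω =
      T' / 2 * (Real.sin (ω * T' / 2) * Real.cos (ω * T' / 2)) :=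
    (aux_deriv_sin ω T').deriv
  have hdc : deriv (fun x => 1 / 2 * Real.cos (x * T' / 2) ^ 2) ω =
      -(T' / 2 * (Real.sin (ω * T' / 2) * Real.cos (ω * T' / 2))) :=
    (aux_deriv_cos ω T').deriv
  have hsum : (∑ j : Fin 4, (deriv (p j) ω) ^ 2 / p j ω) =
      2 * ((T' / 2 * (Real.sin (ω * T' / 2) * Real.cos (ω * T' / 2))) ^ 2 /
        (1 / 2 * Real.sin (ω * T' / 2) ^ 2)) +
      2 * ((T' / 2 * (Real.sin (ω * T' / 2) * Real.cos (ω * T' / 2))) ^ 2 /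
        (1 / 2 * Real.cos (ω * T' / 2) ^ 2)) := by
    simp only [p, Fin.sum_univ_four]
    norm_num [hds, hdc, show (1:Fin 4) ≠ 3 from by decide, show (2:Fin 4) ≠ 3 from by decide,
      show (2:Fin 4) ≠ 0 from by decide, show (1:Fin 4) ≠ 0 from by decide]
    ring
  rw [hsum]
  have hpyth := Real.sin_sq_add_cos_sq (ω * T' / 2)
  have e1 : 2 * ((T' / 2 * (Real.sin (ω * T' / 2) * Real.cos (ω * T' / 2))) ^ 2 /
      (1 / 2 * Real.sin (ω * T' / 2) ^ 2)) = T' ^ 2 * Real.cos (ω * T' / 2) ^ 2 := by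
    field_simp
    rw [mul_comm T' ω, mul_div_cancel_left₀ _ hs]
  have e2 : 2 * ((T' / 2 * (Real.sin (ω * T' / 2) * Real.cos (ω * T' / 2))) ^ 2 /
      (1 / 2 * Real.cos (ω * T' / 2) ^ 2)) = T' ^ 2 * Real.sin (ω * T' / 2) ^ 2 := by
    field_simp
    rw [mul_comm T' ω, mul_div_cancel_right₀ _ hc]
  rw [e1, e2]
  linear_combination T' ^ 2 * hpyth
end
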